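/- Let F be a field of characteristic 0 or characteristic not dividing n, let N ≥ n, and let R = [F][x]/(x^{N+1}) be the nonunital truncated polynomial algebra (spanned by x, x^2, ..., x^N). If U is an F-subspace of R all of whose nonzero elements have nonzero n-th power, or all of whose elements are n-th powers in R, then dim U ≤ N/n. -/

import Mathlib

open Pointwise

/-- `pw x n` is the `n`-th power of `x` in any magma, for `n ≥ 1`
(with the junk value `pw x 0 = x`). -/
def pw {R : Type*} [Mul R] (x : R) : ℕ → R
  | 0 => x
  | 1 => x
  | n + 2 => x * pw x (n + 1)

section aux
variable {F R : Type*} [Field F] [NonUnitalCommRing R] [Module F R]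
  [SMulCommClass F R R] [IsScalarTower F R R]

lemma pw_one (x : R) : pw x 1 = x := rfl

lemma pw_succ (x : R) : ∀ k, 1 ≤ k → pw x (k+1) = x * pw x k
  | _+1, _ => rfl

lemma pw_add (x : R) (a : ℕ) (ha : 1 ≤ a) : ∀ b, 1 ≤ b → pw x (a+b) = pw x a * pw x b := by
  intro b
  induction b with
  | zero => omega
  | succ b ih =>
    intro _
    rcases Nat.eq_zero_or_pos b with rfl | hb
    · rw [pw_succ x a ha, pw_one, mul_comm]
    · rw [show a + (b+1) = (a+b)+1 by ring, pw_succ x (a+b) (by omega), ih hb,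
        pw_succ x b hb, mul_left_comm]

lemma pw_zero (n : ℕ) : pw (0 : R) n = 0 := by
  match n with
  | 0 => rfl
  | 1 => rfl
  | n+2 => show (0:R) * _ = 0; rw [zero_mul]

/-- the order filtration -/
def Df (F : Type*) {R : Type*} [Field F] [NonUnitalCommRing R] [Module F R]
    (x : R) (k : ℕ) : Submodule F R :=
  Submodule.span F (pw x '' Set.Ici k)

lemma Df_antitone (x : R) {k l : ℕ} (h : k ≤ l) : Df F x l ≤ Df F x k :=
  Submodule.span_mono (Set.image_mono (Set.Ici_subset_Ici.2 h))

lemma pw_mem_Df (x : R) {j k : ℕ} (h : k ≤ j) : pw x j ∈ Df F x k :=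
  Submodule.subset_span ⟨j, h, rfl⟩

lemma Df_mul (x : R) {a b : ℕ} (ha : 1 ≤ a) (hb : 1 ≤ b) {u v : R}
    (hu : u ∈ Df F x a) (hv : v ∈ Df F x b) : u * v ∈ Df F x (a+b) := by
  have step1 : ∀ i, a ≤ i → ∀ w ∈ Df F x b, pw x i * w ∈ Df F x (a+b) := by
    intro i hi w hw
    have : Df F x b ≤ (Df F x (a+b)).comap (LinearMap.mulLeft F (pw x i)) := by
      apply Submodule.span_le.2
      rintro _ ⟨j, hj, rfl⟩
      show pw x i * pw x j ∈ Df F x (a+b)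
      rw [← pw_add x i (le_trans ha hi) j (le_trans hb hj)]
      exact pw_mem_Df x (add_le_add hi hj)
    exact this hw
  have : Df F x a ≤ (Df F x (a+b)).comap (LinearMap.mulRight F v) := by
    apply Submodule.span_le.2
    rintro _ ⟨i, hi, rfl⟩
    show pw x i * v ∈ Df F x (a+b)
    exact step1 i hi v hv
  exact this hu

lemma pw_mem_Df_pow (x : R) {k : ℕ} (hk : 1 ≤ k) {u : R} (hu : u ∈ Df F x k) :
    ∀ n, 1 ≤ n → pw u n ∈ Df F x (n*k) := by
  intro n
  induction n with
  | zero => omega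
  | succ n ih =>
    intro _
    rcases Nat.eq_zero_or_pos n with rfl | hn
    · simpa [pw_one] using hu
    · rw [pw_succ u n hn, show (n+1)*k = k + n*k by ring]
      exact Df_mul x hk (Nat.mul_pos hn hk) hu (ih hn)

end aux

section aux2
variable {F R : Type*} [Field F] [NonUnitalCommRing R] [Module F R]
  [SMulCommClass F R R] [IsScalarTower F R R]
  {N : ℕ} {x : R}

lemma pw_x_zero (hx : pw x (N+1) = 0) {j : ℕ} (hj : N+1 ≤ j) : pw x j = 0 := by
  rcases Nat.eq_or_lt_of_le hj with rfl | hj'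
  · exact hx
  · rw [show j = (N+1) + (j - (N+1)) by omega,
      pw_add x (N+1) (by omega) (j - (N+1)) (by omega), hx, zero_mul]

lemma Df_bot (hx : pw x (N+1) = 0) {v : R} (hv : v ∈ Df F x (N+1)) : v = 0 := by
  have : Df F x (N+1) ≤ (⊥ : Submodule F R) := by
    apply Submodule.span_le.2
    rintro _ ⟨j, hj, rfl⟩
    simp [pw_x_zero hx hj]
  simpa using this hv

variable (b : Module.Basis (Fin N) F R) (hb : ∀ i : Fin N, b i = pw x ((i : ℕ) + 1))
include hb in
lemma repr_Df (hx : pw x (N+1) = 0) {k : ℕ} {v : R} (hv : v ∈ Df F x (k+1))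
    {i : Fin N} (hi : (i:ℕ) < k) : b.repr v i = 0 := by
  have : Df F x (k+1) ≤ LinearMap.ker (b.coord i) := by
    apply Submodule.span_le.2
    rintro _ ⟨j, hj, rfl⟩
    simp only [SetLike.mem_coe, LinearMap.mem_ker]
    have hj' : k + 1 ≤ j := hj
    rcases le_or_gt j N with hjN | hjN
    · have hj1 : 1 ≤ j := by omega
      have : pw x j = b ⟨j-1, by omega⟩ := by rw [hb ⟨j-1, by omega⟩]; congr 1; simp only [Fin.val_mk]; omega
      rw [this, Module.Basis.coord_apply, Module.Basis.repr_self, Finsupp.single_apply]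
      have : ¬ ((⟨j-1, by omega⟩ : Fin N) = i) := by
        intro h
        have := congrArg Fin.val h
        simp at this
        omega
      simp [this]
    · rw [pw_x_zero hx (by omega)]; simp
  exact this hv

include hb in
lemma mem_Df_of_repr {k : ℕ} {v : R}
    (h : ∀ i ∈ (b.repr v).support, k ≤ (i:ℕ)+1) : v ∈ Df F x k := by
  have h1 := b.mem_span_repr_support v
  refine Submodule.span_le.2 ?_ h1
  rintro _ ⟨i, hi, rfl⟩
  rw [hb i]
  exact pw_mem_Df x (h i (by simpa using hi))

/-- Lemma B : leading term of a power -/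
lemma pw_leading {m : ℕ} (hm : 1 ≤ m) {c : F} {u : R}
    (hu : u - c • pw x m ∈ Df F x (m+1)) :
    ∀ n, 1 ≤ n → pw u n - c^n • pw x (n*m) ∈ Df F x (n*m+1) := by
  have humem : u ∈ Df F x m := by
    have : u = (u - c • pw x m) + c • pw x m := by abel
    rw [this]
    exact Submodule.add_mem _ (Df_antitone x (by omega) hu)
      (Submodule.smul_mem _ _ (pw_mem_Df x le_rfl))
  intro n
  induction n with
  | zero => omega
  | succ n ih =>
    intro _
    rcases Nat.eq_zero_or_pos n with rfl | hn
    · simpa [pw_one] using hu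
    · have key : pw u (n+1) - c^(n+1) • pw x ((n+1)*m) =
          (u - c • pw x m) * pw u n
          + c • (pw x m * (pw u n - c^n • pw x (n*m))) := by
        rw [pw_succ u n hn, show (n+1)*m = m + n*m by ring,
          pw_add x m hm (n*m) (Nat.mul_pos hn hm),
          sub_mul, mul_sub, smul_sub, smul_mul_assoc, mul_smul_comm, smul_smul,
          pow_succ, mul_comm (c^n) c]
        abel
      rw [key]
      refine Submodule.add_mem _ ?_ (Submodule.smul_mem _ _ ?_)
      · have h1 : (u - c • pw x m) * pw u n ∈ Df F x ((m+1) + n*m) :=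
          Df_mul x (by omega) (Nat.mul_pos hn hm) hu (pw_mem_Df_pow x hm humem n hn)
        exact Df_antitone x (by rw [Nat.succ_mul]; omega) h1
      · have h2 : pw x m * (pw u n - c^n • pw x (n*m)) ∈ Df F x (m + (n*m+1)) :=
          Df_mul x hm (by omega) (pw_mem_Df x le_rfl) (ih hn)
        exact Df_antitone x (by rw [Nat.succ_mul]; omega) h2

end aux2

section count
variable {F R : Type*} [Field F] [AddCommGroup R] [Module F R]

lemma finrank_le_card {ι : Type*} [Fintype ι] (b : Module.Basis ι F R) (U : Submodule F R)
    (S : Finset ι) (h : ∀ u ∈ U, u ≠ 0 → ∃ i ∈ S, b.repr u i ≠ 0) :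
    Module.finrank F U ≤ S.card := by
  let φ : U →ₗ[F] (S → F) := LinearMap.pi fun i => (b.coord i.1).comp U.subtype
  have hker : LinearMap.ker φ = ⊥ := by
    apply (Submodule.eq_bot_iff _).2
    intro u hu
    by_contra h0
    obtain ⟨i, hiS, hi⟩ := h u.1 u.2 (fun hz => h0 (Subtype.ext hz))
    exact hi (congrFun (LinearMap.mem_ker.1 hu) ⟨i, hiS⟩)
  have hinj : Function.Injective φ := LinearMap.ker_eq_bot.1 hker
  calc Module.finrank F U ≤ Module.finrank F (S → F) :=
        LinearMap.finrank_le_finrank_of_injective hinj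
    _ = Fintype.card S := Module.finrank_fintype_fun_eq_card F
    _ = S.card := Fintype.card_coe S

end count


theorem stmt_17 {F R : Type*} [Field F] (p n N : ℕ) [CharP F p] (hchar : p = 0 ∨ ¬ p ∣ n)
    (hn : 1 ≤ n) (hN : n ≤ N)
    [NonUnitalCommRing R] [Module F R] [SMulCommClass F R R] [IsScalarTower F R R]
    (x : R) (b : Module.Basis (Fin N) F R) (hb : ∀ i : Fin N, b i = pw x ((i : ℕ) + 1))
    (hx : pw x (N + 1) = 0)
    (U : Submodule F R)
    (hU : (∀ u ∈ U, u ≠ 0 → pw u n ≠ 0) ∨ (∀ u ∈ U, ∃ r : R, pw r n = u)) :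
    n * Module.finrank F U ≤ N := by
  have hn0 : 0 < n := hn
  suffices hfr : Module.finrank F U ≤ N / n by
    calc n * Module.finrank F U ≤ n * (N / n) := Nat.mul_le_mul_left n hfr
      _ = (N / n) * n := mul_comm _ _
      _ ≤ N := Nat.div_mul_le_self N n
  -- order of a nonzero element
  have hmin : ∀ u : R, u ≠ 0 → ((b.repr u).support).Nonempty := by
    intro u hu0
    rw [Finsupp.support_nonempty_iff]
    intro h
    exact hu0 (by simpa using congrArg b.repr.symm h)
  rcases hU with hU1 | hU2
  · -- case 1
    set S : Finset (Fin N) := Finset.univ.filter (fun i : Fin N => n * ((i:ℕ)+1) ≤ N) with hS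
    have hcard : S.card ≤ N / n := by
      have h1 : S.card ≤ (Finset.range (N / n)).card := by
        refine Finset.card_le_card_of_injOn (fun i => (i : ℕ)) ?_ ?_
        · intro i hi
          rw [hS, Finset.mem_coe, Finset.mem_filter] at hi
          rw [Finset.mem_coe, Finset.mem_range]
          have : (i:ℕ) + 1 ≤ N / n := (Nat.le_div_iff_mul_le hn0).2 (by rw [mul_comm]; exact hi.2)
          show (i:ℕ) < N / n
          omega
        · intro a _ b _ h
          exact Fin.val_injective h
      simpa using h1
    refine le_trans (finrank_le_card b U S ?_) hcard
    intro u huU hu0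
    obtain hne := hmin u hu0
    set m : Fin N := ((b.repr u).support).min' hne with hm
    refine ⟨m, ?_, Finsupp.mem_support_iff.1 (Finset.min'_mem _ hne)⟩
    rw [hS, Finset.mem_filter]
    refine ⟨Finset.mem_univ _, ?_⟩
    have humem : u ∈ Df F x ((m:ℕ)+1) := by
      apply mem_Df_of_repr b hb
      intro i hi
      have := Finset.min'_le _ i hi
      exact Nat.add_le_add_right (Fin.le_iff_val_le_val.1 this) 1
    have hp := pw_mem_Df_pow x (k := (m:ℕ)+1) (by omega) humem n hn
    by_contra hgt
    push_neg at hgt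
    exact hU1 u huU hu0 (Df_bot hx (Df_antitone x (by omega) hp))
  · -- case 2
    set S : Finset (Fin N) := Finset.univ.filter (fun i : Fin N => n ∣ ((i:ℕ)+1)) with hS
    have hcard : S.card ≤ N / n := by
      have : S.card ≤ (Finset.Icc 1 (N / n)).card := by
        refine Finset.card_le_card_of_injOn (fun i => ((i:ℕ)+1) / n) ?_ ?_
        · intro i hi
          rw [hS, Finset.mem_coe, Finset.mem_filter] at hi
          rw [Finset.mem_coe, Finset.mem_Icc]
          constructor
          · exact (Nat.one_le_div_iff hn0).2 (Nat.le_of_dvd (Nat.succ_pos _) hi.2)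
          · exact Nat.div_le_div_right (by omega : (i:ℕ)+1 ≤ N)
        · intro a ha b hb' h
          have ha' : n ∣ (a:ℕ)+1 := by simpa [hS] using ha
          have hb'' : n ∣ (b:ℕ)+1 := by simpa [hS] using hb'
          have ha2 := Nat.div_mul_cancel ha'
          have hb2 := Nat.div_mul_cancel hb''
          have h' : ((a:ℕ)+1)/n = ((b:ℕ)+1)/n := h
          rw [h'] at ha2
          apply Fin.val_injective
          omega
      simpa [Nat.card_Icc] using this
    refine le_trans (finrank_le_card b U S ?_) hcard
    intro u huU hu0
    obtain ⟨r, hr⟩ := hU2 u huU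
    have hr0 : r ≠ 0 := by
      rintro rfl
      rw [pw_zero] at hr
      exact hu0 hr.symm
    obtain hne := hmin r hr0
    set m : Fin N := ((b.repr r).support).min' hne with hm
    set c : F := b.repr r m with hc
    have hc0 : c ≠ 0 := Finsupp.mem_support_iff.1 (Finset.min'_mem _ hne)
    have hd : r - c • pw x ((m:ℕ)+1) ∈ Df F x (((m:ℕ)+1)+1) := by
      apply mem_Df_of_repr b hb
      intro i hi
      rw [Finsupp.mem_support_iff] at hi
      by_contra h'
      push_neg at h'
      have hile : (i:ℕ) ≤ (m:ℕ) := by omega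
      apply hi
      rw [← hb m, map_sub, map_smul, Module.Basis.repr_self]
      rcases eq_or_lt_of_le hile with heq | hlt
      · have : i = m := Fin.val_injective heq
        subst this
        simp [hc]
      · have hnotmem : i ∉ (b.repr r).support := by
          intro hmem
          exact absurd (Finset.min'_le _ i hmem) (not_le.2 (Fin.lt_iff_val_lt_val.2 hlt))
        rw [Finsupp.notMem_support_iff] at hnotmem
        have : i ≠ m := by intro h; rw [h] at hlt; omega
        simp [hnotmem, Finsupp.single_eq_of_ne' (Ne.symm this)]
    have hB := pw_leading (Nat.succ_le_succ (Nat.zero_le _)) hd n hn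
    set q : ℕ := n * ((m:ℕ)+1) with hq
    have hq1 : 1 ≤ q := by rw [hq]; exact Nat.mul_pos hn0 (Nat.succ_pos _)
    have hqN : q ≤ N := by
      by_contra hgt
      push_neg at hgt
      apply hu0
      rw [← hr]
      have hz : pw x q = 0 := pw_x_zero hx (by omega)
      rw [hz, smul_zero, sub_zero] at hB
      exact Df_bot hx (Df_antitone x (by omega) hB)
    set i₀ : Fin N := ⟨q - 1, by omega⟩ with hi₀
    refine ⟨i₀, ?_, ?_⟩
    · rw [hS, Finset.mem_filter]
      exact ⟨Finset.mem_univ _, ⟨(m:ℕ)+1, by simp [hi₀]; omega⟩⟩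
    · have hbq : pw x q = b i₀ := by
        rw [hb i₀]
        congr 1
        simp [hi₀]
        omega
      have hsplit : u = c^n • b i₀ + (pw r n - c^n • pw x q) := by
        rw [← hbq, ← hr]
        abel
      have hdz : b.repr (pw r n - c^n • pw x q) i₀ = 0 :=
        repr_Df b hb hx hB (by simp [hi₀]; omega)
      have hval : b.repr u i₀ = c^n := by
        rw [hsplit, map_add, map_smul, Module.Basis.repr_self, Finsupp.add_apply,
          Finsupp.smul_apply, Finsupp.single_eq_same, hdz, add_zero, smul_eq_mul, mul_one]
      rw [hval]
      exact pow_ne_zero n hc0
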